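/- Let β ∈ ℂ be a root of 8x⁴ + 14x³ − 11x² − 11x − 2 and let K = ℚ(β). Set b₂ = −(6901/1024)β³ − (41387/4096)β² + (91011/8192)β + 39449/8192 and c₂ = −(139/16)β³ − (725/64)β² + (2301/128)β + 871/128, and let W be the Tate normal form E(b₂,c₂): y² + (1−c₂)xy − b₂y = x³ − b₂x² over K. Then (0,0) is an affine point of W and has exact order 17 in the group of K-rational points of W. -/

import Mathlib

open scoped IntermediateField

private lemma step {F : Type*} [Field F] [DecidableEq F] {W : WeierstrassCurve.Affine F}
    {x₁ y₁ x₂ y₂ x₃ y₃ : F} (h₁ : W.Nonsingular x₁ y₁) (h₂ : W.Nonsingular x₂ y₂)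
    (hxy : x₁ = x₂ → y₁ ≠ W.negY x₂ y₂)
    (hx : W.addX x₁ x₂ (W.slope x₁ x₂ y₁ y₂) = x₃)
    (hy : W.addY x₁ x₂ y₁ (W.slope x₁ x₂ y₁ y₂) = y₃) :
    ∃ h₃ : W.Nonsingular x₃ y₃,
      WeierstrassCurve.Affine.Point.some _ _ h₁ + WeierstrassCurve.Affine.Point.some _ _ h₂ =
        WeierstrassCurve.Affine.Point.some _ _ h₃ := by
  subst hx; subst hy
  exact ⟨WeierstrassCurve.Affine.nonsingular_add h₁ h₂ (fun h => hxy h.1 h.2),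
    WeierstrassCurve.Affine.Point.add_some (fun h => hxy h.1 h.2)⟩

set_option maxHeartbeats 4000000 in
/-- Let `β ∈ ℂ` be a root of `8x⁴ + 14x³ - 11x² - 11x - 2` and `K = ℚ(β)`.
With `b₂ = -(6901/1024)β³ - (41387/4096)β² + (91011/8192)β + 39449/8192` and
`c₂ = -(139/16)β³ - (725/64)β² + (2301/128)β + 871/128`, let `W` be the Tate normal form
`E(b₂,c₂)` over `K`. Then `(0,0)` is an affine point of `W` of exact order `17` in the
group of `K`-rational points. -/
theorem tate_normal_form_order_seventeen_beta
    (β : ℂ) (hβ : 8 * β ^ 4 + 14 * β ^ 3 - 11 * β ^ 2 - 11 * β - 2 = 0)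
    (K : IntermediateField ℚ ℂ) (hK : K = ℚ⟮β⟯)
    (b₂ c₂ : K)
    (hb₂ : (b₂ : ℂ) = -(6901 / 1024) * β ^ 3 - (41387 / 4096) * β ^ 2
      + (91011 / 8192) * β + 39449 / 8192)
    (hc₂ : (c₂ : ℂ) = -(139 / 16) * β ^ 3 - (725 / 64) * β ^ 2
      + (2301 / 128) * β + 871 / 128)
    (W : WeierstrassCurve.Affine K)
    (hW : W = { a₁ := 1 - c₂, a₂ := -b₂, a₃ := -b₂, a₄ := 0, a₆ := 0 }) :
    ∃ h : W.Nonsingular 0 0,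
      addOrderOf (WeierstrassCurve.Affine.Point.some _ _ h) = 17 := by
  classical
  have hβK : β ∈ K := by rw [hK]; exact IntermediateField.mem_adjoin_simple_self ℚ β
  set t : K := ⟨β, hβK⟩ with htdef
  have htc : (t : ℂ) = β := rfl
  have ht : 8 * t ^ 4 + 14 * t ^ 3 - 11 * t ^ 2 - 11 * t - 2 = 0 := by
    apply Subtype.coe_injective
    push_cast [htc]
    exact hβ
  have cb1 : ((8192 : K) : ℂ) = 8192 := by norm_cast
  have cb2 : ((39449 : K) : ℂ) = 39449 := by norm_cast
  have cb3 : ((91011 : K) : ℂ) = 91011 := by norm_cast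
  have cb4 : ((82774 : K) : ℂ) = 82774 := by norm_cast
  have cb5 : ((55208 : K) : ℂ) = 55208 := by norm_cast
  have cc1 : ((128 : K) : ℂ) = 128 := by norm_cast
  have cc2 : ((871 : K) : ℂ) = 871 := by norm_cast
  have cc3 : ((2301 : K) : ℂ) = 2301 := by norm_cast
  have cc4 : ((1450 : K) : ℂ) = 1450 := by norm_cast
  have cc5 : ((1112 : K) : ℂ) = 1112 := by norm_cast
  have hbt : (8192 : K) * b₂ = 39449 + 91011 * t - 82774 * t ^ 2 - 55208 * t ^ 3 := by
    apply Subtype.coe_injective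
    push_cast [htc, cb1, cb2, cb3, cb4, cb5]
    rw [hb₂]; ring
  have hct : (128 : K) * c₂ = 871 + 2301 * t - 1450 * t ^ 2 - 1112 * t ^ 3 := by
    apply Subtype.coe_injective
    push_cast [htc, cc1, cc2, cc3, cc4, cc5]
    rw [hc₂]; ring
  have ha1 : W.a₁ = ((-743 : K) / 128 + (-2301 : K) / 128 * t + (725 : K) / 64 * t ^ 2 + (139 : K) / 16 * t ^ 3) := by
    rw [hW]; show 1 - c₂ = _; linear_combination (-1 : K) / 128 * hct
  have ha2 : W.a₂ = ((-39449 : K) / 8192 + (-91011 : K) / 8192 * t + (41387 : K) / 4096 * t ^ 2 + (6901 : K) / 1024 * t ^ 3) := by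
    rw [hW]; show -b₂ = _; linear_combination (-1 : K) / 8192 * hbt
  have ha3 : W.a₃ = ((-39449 : K) / 8192 + (-91011 : K) / 8192 * t + (41387 : K) / 4096 * t ^ 2 + (6901 : K) / 1024 * t ^ 3) := by
    rw [hW]; show -b₂ = _; linear_combination (-1 : K) / 8192 * hbt
  have ha4 : W.a₄ = 0 := by rw [hW]
  have ha6 : W.a₆ = 0 := by rw [hW]
  have hDval : W.Δ = ((-33654120428912293108255 : K) / 147573952589676412928 + (-216685379078867137079141 : K) / 147573952589676412928 * t + (-195804626352251583725571 : K) / 73786976294838206464 * t ^ 2 + (-17511298609211247722909 : K) / 18446744073709551616 * t ^ 3) := by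
    simp only [WeierstrassCurve.Δ, WeierstrassCurve.b₂, WeierstrassCurve.b₄, WeierstrassCurve.b₆, WeierstrassCurve.b₈, ha1, ha2, ha3, ha4, ha6]
    linear_combination ((1504599936660103306667433 : K) / 36893488147419103232 + (1801644552573465333715685 : K) / 147573952589676412928 * t + (-161320541508545924240141029 : K) / 73786976294838206464 * t ^ 2 + (-1012124131477025193074233199 : K) / 147573952589676412928 * t ^ 3 + (151723162571008846049563435 : K) / 18446744073709551616 * t ^ 4 + (6406348969408519401344496551 : K) / 147573952589676412928 * t ^ 5 + (-504909814638502489793595331 : K) / 36893488147419103232 * t ^ 6 + (-4110699282102443936652882259 : K) / 36893488147419103232 * t ^ 7 + (50580742245364273344765407 : K) / 2305843009213693952 * t ^ 8 + (1191180209442159544261399781 : K) / 9223372036854775808 * t ^ 9 + (-20631373330591057966565287 : K) / 2305843009213693952 * t ^ 10 + (-186259232000518307863115745 : K) / 2305843009213693952 * t ^ 11 + (-2264197948147318708271961 : K) / 288230376151711744 * t ^ 12 + (3832910050408939372649561 : K) / 144115188075855872 * t ^ 13 + (33775466184833382790167 : K) / 4503599627370496 * t ^ 14 + (-28702622071410682480383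 : K) / 9007199254740992 * t ^ 15 + (-1954085554760238481157 : K) / 1125899906842624 * t ^ 16 + (-122686077993259879741 : K) / 562949953421312 * t ^ 17) * ht
  have hDinv : ((-33654120428912293108255 : K) / 147573952589676412928 + (-216685379078867137079141 : K) / 147573952589676412928 * t + (-195804626352251583725571 : K) / 73786976294838206464 * t ^ 2 + (-17511298609211247722909 : K) / 18446744073709551616 * t ^ 3 : K) * ((-3004151395 : K) / 1114112 + (-30195208771 : K) / 2228224 * t + (-9396971701 : K) / 1114112 * t ^ 2 + (6364570261 : K) / 278528 * t ^ 3) = 1 := by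
    linear_combination ((-101101908420103396084245384225789 : K) / 328827822935179135520079872 + (-17735052461853094818784122398887 : K) / 9671406556917033397649408 * t + (-111451890359676567923930589809249 : K) / 41103477866897391940009984 * t ^ 2) * ht
  have hD : W.Δ ≠ 0 := by
    rw [hDval]; intro hz; rw [hz, zero_mul] at hDinv; exact zero_ne_one hDinv
  have h1 : W.Nonsingular 0 0 :=
    (W.equation_iff_nonsingular_of_Δ_ne_zero hD).mp ((W.equation_zero).mpr ha6)
  have hd2 : ((0 : K) - W.negY ((0 : K)) ((0 : K))) * ((-133 : K) / 8 + (-701 : K) / 16 * t + (239 : K) / 8 * t ^ 2 + (53 : K) / 2 * t ^ 3) = 1 := by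
    simp only [WeierstrassCurve.Affine.negY, ha1, ha3]
    linear_combination ((-5181181 : K) / 131072 + (1282579 : K) / 65536 * t + (365753 : K) / 16384 * t ^ 2) * ht
  have hy2 : ((0 : K) : K) ≠ W.negY ((0 : K)) ((0 : K)) := by
    have hzz : ((0 : K) : K) - W.negY ((0 : K)) ((0 : K)) ≠ 0 := fun hz => by
      rw [hz, zero_mul] at hd2; exact zero_ne_one hd2
    exact sub_ne_zero.mp hzz
  have hs2 : W.slope ((0 : K)) ((0 : K)) ((0 : K)) ((0 : K)) = ((0 : K)) := by
    rw [WeierstrassCurve.Affine.slope_of_Y_ne rfl hy2, div_eq_iff (sub_ne_zero.mpr hy2)]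
    simp only [WeierstrassCurve.Affine.negY, ha1, ha2, ha3, ha4]
    linear_combination ((0 : K)) * ht
  have hx2 : W.addX ((0 : K)) ((0 : K)) (W.slope ((0 : K)) ((0 : K)) ((0 : K)) ((0 : K))) = ((39449 : K) / 8192 + (91011 : K) / 8192 * t + (-41387 : K) / 4096 * t ^ 2 + (-6901 : K) / 1024 * t ^ 3) := by
    rw [hs2]; simp only [WeierstrassCurve.Affine.addX, ha1, ha2]
    linear_combination ((0 : K)) * ht
  have hyy2 : W.addY ((0 : K)) ((0 : K)) ((0 : K)) (W.slope ((0 : K)) ((0 : K)) ((0 : K)) ((0 : K))) = ((120037 : K) / 1048576 + (-2112121 : K) / 1048576 * t + (-1971855 : K) / 524288 * t ^ 2 + (-172433 : K) / 131072 * t ^ 3) := by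
    rw [hs2]
    simp only [WeierstrassCurve.Affine.addY, WeierstrassCurve.Affine.negAddY, WeierstrassCurve.Affine.addX, WeierstrassCurve.Affine.negY, ha1, ha2, ha3]
    linear_combination ((-17120021 : K) / 1048576 + (4041345 : K) / 524288 * t + (959239 : K) / 131072 * t ^ 2) * ht
  obtain ⟨h2, e2⟩ := step h1 h1 (fun _ => hy2) hx2 hyy2
  have hd4 : ((120037 : K) / 1048576 + (-2112121 : K) / 1048576 * t + (-1971855 : K) / 524288 * t ^ 2 + (-172433 : K) / 131072 * t ^ 3 - W.negY ((39449 : K) / 8192 + (91011 : K) / 8192 * t + (-41387 : K) / 4096 * t ^ 2 + (-6901 : K) / 1024 * t ^ 3) ((120037 : K) / 1048576 + (-2112121 : K) / 1048576 * t + (-1971855 : K) / 524288 * t ^ 2 + (-172433 : K) / 131072 * t ^ 3)) * ((401 : K) / 128 + (969 : K) / 256 * t + (261 : K) / 128 * t ^ 2 + (-265 : K) / 32 * t ^ 3) = 1 := by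
    simp only [WeierstrassCurve.Affine.negY, ha1, ha3]
    linear_combination ((13816339733 : K) / 268435456 + (10422329663 : K) / 268435456 * t + (-585549389 : K) / 33554432 * t ^ 2 + (-11987407357 : K) / 67108864 * t ^ 3 + (410297523 : K) / 8388608 * t ^ 4 + (254198335 : K) / 4194304 * t ^ 5) * ht
  have hy4 : ((120037 : K) / 1048576 + (-2112121 : K) / 1048576 * t + (-1971855 : K) / 524288 * t ^ 2 + (-172433 : K) / 131072 * t ^ 3 : K) ≠ W.negY ((39449 : K) / 8192 + (91011 : K) / 8192 * t + (-41387 : K) / 4096 * t ^ 2 + (-6901 : K) / 1024 * t ^ 3) ((120037 : K) / 1048576 + (-2112121 : K) / 1048576 * t + (-1971855 : K) / 524288 * t ^ 2 + (-172433 : K) / 131072 * t ^ 3) := by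
    have hzz : ((120037 : K) / 1048576 + (-2112121 : K) / 1048576 * t + (-1971855 : K) / 524288 * t ^ 2 + (-172433 : K) / 131072 * t ^ 3 : K) - W.negY ((39449 : K) / 8192 + (91011 : K) / 8192 * t + (-41387 : K) / 4096 * t ^ 2 + (-6901 : K) / 1024 * t ^ 3) ((120037 : K) / 1048576 + (-2112121 : K) / 1048576 * t + (-1971855 : K) / 524288 * t ^ 2 + (-172433 : K) / 131072 * t ^ 3) ≠ 0 := fun hz => by
      rw [hz, zero_mul] at hd4; exact zero_ne_one hd4
    exact sub_ne_zero.mp hzz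
  have hs4 : W.slope ((39449 : K) / 8192 + (91011 : K) / 8192 * t + (-41387 : K) / 4096 * t ^ 2 + (-6901 : K) / 1024 * t ^ 3) ((39449 : K) / 8192 + (91011 : K) / 8192 * t + (-41387 : K) / 4096 * t ^ 2 + (-6901 : K) / 1024 * t ^ 3) ((120037 : K) / 1048576 + (-2112121 : K) / 1048576 * t + (-1971855 : K) / 524288 * t ^ 2 + (-172433 : K) / 131072 * t ^ 3) ((120037 : K) / 1048576 + (-2112121 : K) / 1048576 * t + (-1971855 : K) / 524288 * t ^ 2 + (-172433 : K) / 131072 * t ^ 3) = ((1313 : K) / 128 + (3419 : K) / 128 * t + (-1219 : K) / 64 * t ^ 2 + (-221 : K) / 16 * t ^ 3) := by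
    rw [WeierstrassCurve.Affine.slope_of_Y_ne rfl hy4, div_eq_iff (sub_ne_zero.mpr hy4)]
    simp only [WeierstrassCurve.Affine.negY, ha1, ha2, ha3, ha4]
    linear_combination ((-24000600629 : K) / 134217728 + (-47265147701 : K) / 134217728 * t + (20024509883 : K) / 33554432 * t ^ 2 + (9199926009 : K) / 33554432 * t ^ 3 + (-1031224793 : K) / 4194304 * t ^ 4 + (-211991819 : K) / 2097152 * t ^ 5) * ht
  have hx4 : W.addX ((39449 : K) / 8192 + (91011 : K) / 8192 * t + (-41387 : K) / 4096 * t ^ 2 + (-6901 : K) / 1024 * t ^ 3) ((39449 : K) / 8192 + (91011 : K) / 8192 * t + (-41387 : K) / 4096 * t ^ 2 + (-6901 : K) / 1024 * t ^ 3) (W.slope ((39449 : K) / 8192 + (91011 : K) / 8192 * t + (-41387 : K) / 4096 * t ^ 2 + (-6901 : K) / 1024 * t ^ 3) ((39449 : K) / 8192 + (91011 : K) / 8192 * t + (-41387 : K) / 4096 * t ^ 2 + (-6901 : K) / 1024 * t ^ 3) ((120037 : K) / 1048576 + (-2112121 : K) / 1048576 * t + (-1971855 : K) / 524288 * t ^ 2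 + (-172433 : K) / 131072 * t ^ 3) ((120037 : K) / 1048576 + (-2112121 : K) / 1048576 * t + (-1971855 : K) / 524288 * t ^ 2 + (-172433 : K) / 131072 * t ^ 3)) = ((9891 : K) / 4096 + (24785 : K) / 4096 * t + (-7945 : K) / 2048 * t ^ 2 + (-1495 : K) / 512 * t ^ 3) := by
    rw [hs4]; simp only [WeierstrassCurve.Affine.addX, ha1, ha2]
    linear_combination ((-157487 : K) / 8192 + (41139 : K) / 4096 * t + (9061 : K) / 1024 * t ^ 2) * ht
  have hyy4 : W.addY ((39449 : K) / 8192 + (91011 : K) / 8192 * t + (-41387 : K) / 4096 * t ^ 2 + (-6901 : K) / 1024 * t ^ 3) ((39449 : K) / 8192 + (91011 : K) / 8192 * t + (-41387 : K) / 4096 * t ^ 2 + (-6901 : K) / 1024 * t ^ 3) ((120037 : K) / 1048576 + (-2112121 : K) / 1048576 * t + (-1971855 : K) / 524288 * t ^ 2 + (-172433 : K) / 131072 * t ^ 3) (W.slope ((39449 : K) / 8192 + (91011 : K) / 8192 * t + (-41387 : K) / 4096 * t ^ 2 + (-6901 : K) / 1024 * t ^ 3) ((39449 : K) / 8192 + (91011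 : K) / 8192 * t + (-41387 : K) / 4096 * t ^ 2 + (-6901 : K) / 1024 * t ^ 3) ((120037 : K) / 1048576 + (-2112121 : K) / 1048576 * t + (-1971855 : K) / 524288 * t ^ 2 + (-172433 : K) / 131072 * t ^ 3) ((120037 : K) / 1048576 + (-2112121 : K) / 1048576 * t + (-1971855 : K) / 524288 * t ^ 2 + (-172433 : K) / 131072 * t ^ 3)) = ((1437357 : K) / 524288 + (3437727 : K) / 524288 * t + (-941799 : K) / 262144 * t ^ 2 + (-187961 : K) / 65536 * t ^ 3) := by
    rw [hs4]
    simp only [WeierstrassCurve.Affine.addY, WeierstrassCurve.Affine.negAddY, WeierstrassCurve.Affine.addX, WeierstrassCurve.Affine.negY, ha1, ha2, ha3]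
    linear_combination ((68479831 : K) / 1048576 + (35202611 : K) / 262144 * t + (-4354103 : K) / 16384 * t ^ 2 + (-12882799 : K) / 131072 * t ^ 3 + (1962383 : K) / 16384 * t ^ 4 + (371501 : K) / 8192 * t ^ 5) * ht
  obtain ⟨h4, e4⟩ := step h2 h2 (fun _ => hy4) hx4 hyy4
  have hd8 : ((1437357 : K) / 524288 + (3437727 : K) / 524288 * t + (-941799 : K) / 262144 * t ^ 2 + (-187961 : K) / 65536 * t ^ 3 - W.negY ((9891 : K) / 4096 + (24785 : K) / 4096 * t + (-7945 : K) / 2048 * t ^ 2 + (-1495 : K) / 512 * t ^ 3) ((1437357 : K) / 524288 + (3437727 : K) / 524288 * t + (-941799 : K) / 262144 * t ^ 2 + (-187961 : K) / 65536 * t ^ 3)) * ((927 : K) / 32 + (4753 : K) / 64 * t + (-3689 : K) / 64 * t ^ 2 + (-609 : K) / 16 * t ^ 3) = 1 := by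
    simp only [WeierstrassCurve.Affine.negY, ha1, ha3]
    linear_combination ((6504882661 : K) / 33554432 + (9025509117 : K) / 16777216 * t + (-25404162361 : K) / 33554432 * t ^ 2 + (-6465848655 : K) / 16777216 * t ^ 3 + (18958625 : K) / 65536 * t ^ 4 + (126553245 : K) / 1048576 * t ^ 5) * ht
  have hy8 : ((1437357 : K) / 524288 + (3437727 : K) / 524288 * t + (-941799 : K) / 262144 * t ^ 2 + (-187961 : K) / 65536 * t ^ 3 : K) ≠ W.negY ((9891 : K) / 4096 + (24785 : K) / 4096 * t + (-7945 : K) / 2048 * t ^ 2 + (-1495 : K) / 512 * t ^ 3) ((1437357 : K) / 524288 + (3437727 : K) / 524288 * t + (-941799 : K) / 262144 * t ^ 2 + (-187961 : K) / 65536 * t ^ 3) := by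
    have hzz : ((1437357 : K) / 524288 + (3437727 : K) / 524288 * t + (-941799 : K) / 262144 * t ^ 2 + (-187961 : K) / 65536 * t ^ 3 : K) - W.negY ((9891 : K) / 4096 + (24785 : K) / 4096 * t + (-7945 : K) / 2048 * t ^ 2 + (-1495 : K) / 512 * t ^ 3) ((1437357 : K) / 524288 + (3437727 : K) / 524288 * t + (-941799 : K) / 262144 * t ^ 2 + (-187961 : K) / 65536 * t ^ 3) ≠ 0 := fun hz => by
      rw [hz, zero_mul] at hd8; exact zero_ne_one hd8
    exact sub_ne_zero.mp hzz
  have hs8 : W.slope ((9891 : K) / 4096 + (24785 : K) / 4096 * t + (-7945 : K) / 2048 * t ^ 2 + (-1495 : K) / 512 * t ^ 3) ((9891 : K) / 4096 + (24785 : K) / 4096 * t + (-7945 : K) / 2048 * t ^ 2 + (-1495 : K) / 512 * t ^ 3) ((1437357 : K) / 524288 + (3437727 : K) / 524288 * t + (-941799 : K) / 262144 * t ^ 2 + (-187961 : K) / 65536 * t ^ 3) ((1437357 : K) / 524288 + (3437727 : K) / 524288 * t + (-941799 : K) / 262144 * t ^ 2 + (-187961 : K) / 65536 * t ^ 3) =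 ((-263 : K) / 128 + (-349 : K) / 128 * t + (309 : K) / 64 * t ^ 2 + (43 : K) / 16 * t ^ 3) := by
    rw [WeierstrassCurve.Affine.slope_of_Y_ne rfl hy8, div_eq_iff (sub_ne_zero.mpr hy8)]
    simp only [WeierstrassCurve.Affine.negY, ha1, ha2, ha3, ha4]
    linear_combination ((579783809 : K) / 67108864 + (1192077185 : K) / 67108864 * t + (-859833903 : K) / 16777216 * t ^ 2 + (-287029685 : K) / 16777216 * t ^ 3 + (47878165 : K) / 2097152 * t ^ 4 + (8935615 : K) / 1048576 * t ^ 5) * ht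
  have hx8 : W.addX ((9891 : K) / 4096 + (24785 : K) / 4096 * t + (-7945 : K) / 2048 * t ^ 2 + (-1495 : K) / 512 * t ^ 3) ((9891 : K) / 4096 + (24785 : K) / 4096 * t + (-7945 : K) / 2048 * t ^ 2 + (-1495 : K) / 512 * t ^ 3) (W.slope ((9891 : K) / 4096 + (24785 : K) / 4096 * t + (-7945 : K) / 2048 * t ^ 2 + (-1495 : K) / 512 * t ^ 3) ((9891 : K) / 4096 + (24785 : K) / 4096 * t + (-7945 : K) / 2048 * t ^ 2 + (-1495 : K) / 512 * t ^ 3) ((1437357 : K) / 524288 + (3437727 : K) / 524288 * t + (-941799 : K) / 262144 * t ^ 2 + (-187961 : K) / 65536 * t ^ 3) ((1437357 : K) / 524288 + (3437727 : K) / 524288 * t + (-941799 : K) / 262144 * t ^ 2 + (-187961 : K) / 65536 * t ^ 3)) = ((4979 : K) / 1024 + (12481 : K) / 1024 * t + (-4985 : K) / 512 * t ^ 2 + (-871 : K) / 128 * t ^ 3) := by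
    rw [hs8]; simp only [WeierstrassCurve.Affine.addX, ha1, ha2]
    linear_combination ((-46171 : K) / 8192 + (22959 : K) / 4096 * t + (3913 : K) / 1024 * t ^ 2) * ht
  have hyy8 : W.addY ((9891 : K) / 4096 + (24785 : K) / 4096 * t + (-7945 : K) / 2048 * t ^ 2 + (-1495 : K) / 512 * t ^ 3) ((9891 : K) / 4096 + (24785 : K) / 4096 * t + (-7945 : K) / 2048 * t ^ 2 + (-1495 : K) / 512 * t ^ 3) ((1437357 : K) / 524288 + (3437727 : K) / 524288 * t + (-941799 : K) / 262144 * t ^ 2 + (-187961 : K) / 65536 * t ^ 3) (W.slope ((9891 : K) / 4096 + (24785 : K) / 4096 * t + (-7945 : K) / 2048 * t ^ 2 + (-1495 : K) / 512 * t ^ 3) ((9891 : K) / 4096 + (24785 : K) / 4096 * t + (-7945 : K) / 2048 * t ^ 2 + (-1495 : K) / 512 * t ^ 3) ((1437357 : K) / 524288 + (3437727 : K) / 524288 * t + (-941799 : K) / 262144 * t ^ 2 + (-187961 : K) / 65536 * t ^ 3) ((1437357 : K) / 524288 + (3437727 : K) / 524288 * t + (-941799 : K) / 262144 * t ^ 2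 + (-187961 : K) / 65536 * t ^ 3)) = ((-329407 : K) / 131072 + (-985157 : K) / 131072 * t + (360925 : K) / 65536 * t ^ 2 + (65667 : K) / 16384 * t ^ 3) := by
    rw [hs8]
    simp only [WeierstrassCurve.Affine.addY, WeierstrassCurve.Affine.negAddY, WeierstrassCurve.Affine.addX, WeierstrassCurve.Affine.negY, ha1, ha2, ha3]
    linear_combination ((-16571799 : K) / 262144 + (-33201171 : K) / 524288 * t + (32221625 : K) / 131072 * t ^ 2 + (6902769 : K) / 131072 * t ^ 3 + (-2056145 : K) / 16384 * t ^ 4 + (-356083 : K) / 8192 * t ^ 5) * ht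
  obtain ⟨h8, e8⟩ := step h4 h4 (fun _ => hy8) hx8 hyy8
  have hd16 : ((-329407 : K) / 131072 + (-985157 : K) / 131072 * t + (360925 : K) / 65536 * t ^ 2 + (65667 : K) / 16384 * t ^ 3 - W.negY ((4979 : K) / 1024 + (12481 : K) / 1024 * t + (-4985 : K) / 512 * t ^ 2 + (-871 : K) / 128 * t ^ 3) ((-329407 : K) / 131072 + (-985157 : K) / 131072 * t + (360925 : K) / 65536 * t ^ 2 + (65667 : K) / 16384 * t ^ 3)) * ((-107 : K) / 4 + (-485 : K) / 8 * t + (409 : K) / 8 * t ^ 2 + (121 : K) / 4 * t ^ 3) = 1 := by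
    simp only [WeierstrassCurve.Affine.negY, ha1, ha3]
    linear_combination ((-533340977 : K) / 1048576 + (-430651989 : K) / 524288 * t + (1621306911 : K) / 1048576 * t ^ 2 + (9825445 : K) / 16384 * t ^ 3 + (-156740189 : K) / 262144 * t ^ 4 + (-14649349 : K) / 65536 * t ^ 5) * ht
  have hy16 : ((-329407 : K) / 131072 + (-985157 : K) / 131072 * t + (360925 : K) / 65536 * t ^ 2 + (65667 : K) / 16384 * t ^ 3 : K) ≠ W.negY ((4979 : K) / 1024 + (12481 : K) / 1024 * t + (-4985 : K) / 512 * t ^ 2 + (-871 : K) / 128 * t ^ 3) ((-329407 : K) / 131072 + (-985157 : K) / 131072 * t + (360925 : K) / 65536 * t ^ 2 + (65667 : K) / 16384 * t ^ 3) := by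
    have hzz : ((-329407 : K) / 131072 + (-985157 : K) / 131072 * t + (360925 : K) / 65536 * t ^ 2 + (65667 : K) / 16384 * t ^ 3 : K) - W.negY ((4979 : K) / 1024 + (12481 : K) / 1024 * t + (-4985 : K) / 512 * t ^ 2 + (-871 : K) / 128 * t ^ 3) ((-329407 : K) / 131072 + (-985157 : K) / 131072 * t + (360925 : K) / 65536 * t ^ 2 + (65667 : K) / 16384 * t ^ 3) ≠ 0 := fun hz => by
      rw [hz, zero_mul] at hd16; exact zero_ne_one hd16
    exact sub_ne_zero.mp hzz
  have hs16 : W.slope ((4979 : K) / 1024 + (12481 : K) / 1024 * t + (-4985 : K) / 512 * t ^ 2 + (-871 : K) / 128 * t ^ 3) ((4979 : K) / 1024 + (12481 : K) / 1024 * t + (-4985 : K) / 512 * t ^ 2 + (-871 : K) / 128 * t ^ 3) ((-329407 : K) / 131072 + (-985157 : K) / 131072 * t + (360925 : K) / 65536 * t ^ 2 + (65667 : K) / 16384 * t ^ 3) ((-329407 : K) / 131072 + (-985157 : K) / 131072 * t + (360925 : K) / 65536 * t ^ 2 + (65667 : K) / 16384 * t ^ 3) = ((785 : K) / 128 + (2091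 : K) / 128 * t + (-787 : K) / 64 * t ^ 2 + (-141 : K) / 16 * t ^ 3) := by
    rw [WeierstrassCurve.Affine.slope_of_Y_ne rfl hy16, div_eq_iff (sub_ne_zero.mpr hy16)]
    simp only [WeierstrassCurve.Affine.negY, ha1, ha2, ha3, ha4]
    linear_combination ((-2038100279 : K) / 16777216 + (-3835184695 : K) / 16777216 * t + (1615278617 : K) / 4194304 * t ^ 2 + (770950755 : K) / 4194304 * t ^ 3 + (-81262595 : K) / 524288 * t ^ 4 + (-17070729 : K) / 262144 * t ^ 5) * ht
  have hx16 : W.addX ((4979 : K) / 1024 + (12481 : K) / 1024 * t + (-4985 : K) / 512 * t ^ 2 + (-871 : K) / 128 * t ^ 3) ((4979 : K) / 1024 + (12481 : K) / 1024 * t + (-4985 : K) / 512 * t ^ 2 + (-871 : K) / 128 * t ^ 3) (W.slope ((4979 : K) / 1024 + (12481 : K) / 1024 * t + (-4985 : K) / 512 * t ^ 2 + (-871 : K) / 128 * t ^ 3) ((4979 : K) / 1024 + (12481 : K) / 1024 * t + (-4985 : K) / 512 * t ^ 2 + (-871 : K) / 128 * t ^ 3) ((-329407 : K) / 131072 + (-985157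 : K) / 131072 * t + (360925 : K) / 65536 * t ^ 2 + (65667 : K) / 16384 * t ^ 3) ((-329407 : K) / 131072 + (-985157 : K) / 131072 * t + (360925 : K) / 65536 * t ^ 2 + (65667 : K) / 16384 * t ^ 3)) = ((0 : K)) := by
    rw [hs16]; simp only [WeierstrassCurve.Affine.addX, ha1, ha2]
    linear_combination ((11865 : K) / 8192 + (4171 : K) / 4096 * t + (141 : K) / 1024 * t ^ 2) * ht
  have hyy16 : W.addY ((4979 : K) / 1024 + (12481 : K) / 1024 * t + (-4985 : K) / 512 * t ^ 2 + (-871 : K) / 128 * t ^ 3) ((4979 : K) / 1024 + (12481 : K) / 1024 * t + (-4985 : K) / 512 * t ^ 2 + (-871 : K) / 128 * t ^ 3) ((-329407 : K) / 131072 + (-985157 : K) / 131072 * t + (360925 : K) / 65536 * t ^ 2 + (65667 : K) / 16384 * t ^ 3) (W.slope ((4979 : K) / 1024 + (12481 : K) / 1024 * t + (-4985 : K) / 512 * t ^ 2 + (-871 : K) / 128 * t ^ 3) ((4979 : K) / 1024 + (12481 : K) / 1024 * t + (-4985 : K) / 512 * t ^ 2 + (-871 : K) / 128 * t ^ 3)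 ((-329407 : K) / 131072 + (-985157 : K) / 131072 * t + (360925 : K) / 65536 * t ^ 2 + (65667 : K) / 16384 * t ^ 3) ((-329407 : K) / 131072 + (-985157 : K) / 131072 * t + (360925 : K) / 65536 * t ^ 2 + (65667 : K) / 16384 * t ^ 3)) = ((39449 : K) / 8192 + (91011 : K) / 8192 * t + (-41387 : K) / 4096 * t ^ 2 + (-6901 : K) / 1024 * t ^ 3) := by
    rw [hs16]
    simp only [WeierstrassCurve.Affine.addY, WeierstrassCurve.Affine.negAddY, WeierstrassCurve.Affine.addX, WeierstrassCurve.Affine.negY, ha1, ha2, ha3]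
    linear_combination ((-8725009 : K) / 524288 + (5300123 : K) / 524288 * t + (1379451 : K) / 131072 * t ^ 2 + (182641 : K) / 131072 * t ^ 3 + (4271 : K) / 16384 * t ^ 4 + (141 : K) / 8192 * t ^ 5) * ht
  obtain ⟨h16, e16⟩ := step h8 h8 (fun _ => hy16) hx16 hyy16
  have hfin : ((39449 : K) / 8192 + (91011 : K) / 8192 * t + (-41387 : K) / 4096 * t ^ 2 + (-6901 : K) / 1024 * t ^ 3 : K) = W.negY 0 0 := by
    simp only [WeierstrassCurve.Affine.negY, ha1, ha3]
    linear_combination ((0 : K)) * ht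
  have e17 : WeierstrassCurve.Affine.Point.some _ _ h16 + WeierstrassCurve.Affine.Point.some _ _ h1 = 0 :=
    WeierstrassCurve.Affine.Point.add_of_Y_eq rfl hfin
  set Pt := WeierstrassCurve.Affine.Point.some _ _ h1 with hPt
  have p2 : (2 : ℕ) • Pt = WeierstrassCurve.Affine.Point.some _ _ h2 := by rw [two_nsmul, e2]
  have p4 : (4 : ℕ) • Pt = WeierstrassCurve.Affine.Point.some _ _ h4 := by
    rw [show (4 : ℕ) = 2 + 2 from rfl, add_nsmul, p2, e4]
  have p8 : (8 : ℕ) • Pt = WeierstrassCurve.Affine.Point.some _ _ h8 := by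
    rw [show (8 : ℕ) = 4 + 4 from rfl, add_nsmul, p4, e8]
  have p16 : (16 : ℕ) • Pt = WeierstrassCurve.Affine.Point.some _ _ h16 := by
    rw [show (16 : ℕ) = 8 + 8 from rfl, add_nsmul, p8, e16]
  have h17 : (17 : ℕ) • Pt = 0 := by
    rw [show (17 : ℕ) = 16 + 1 from rfl, add_nsmul, p16, one_nsmul, e17]
  haveI : Fact (Nat.Prime 17) := ⟨by norm_num⟩
  exact ⟨h1, addOrderOf_eq_prime h17 (WeierstrassCurve.Affine.Point.some_ne_zero h1)⟩
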